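/- arXiv:1501.01072 — 2 statements merged into one kernel-verified Lean document; each statement's English description precedes it below -/
import Mathlib

section
/- Let H be a real Hilbert space, a : H × H → ℝ a continuous coercive symmetric bilinear form, f ∈ H, and K ⊆ H a nonempty closed convex set. Then there exists a unique u ∈ K such that a(u, v - u) ≥ ⟨f, v - u⟩ for all v ∈ K. -/
open RealInnerProductSpace

set_option maxHeartbeats 1000000

/-- Lions–Stampacchia theorem: for a continuous coercive symmetric bilinear form `a`
on a real Hilbert space `H`, `f ∈ H` and a nonempty closed convex set `K ⊆ H`, there is
a unique `u ∈ K` such that `a(u, v-u) ≥ ⟨f, v-u⟩` for all `v ∈ K`. -/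
theorem exists_unique_solution_variationalInequality
    {H : Type*} [NormedAddCommGroup H] [InnerProductSpace ℝ H] [CompleteSpace H]
    (a : H →ₗ[ℝ] H →ₗ[ℝ] ℝ) (C c : ℝ) (hc : 0 < c)
    (hbound : ∀ u v : H, |a u v| ≤ C * ‖u‖ * ‖v‖)
    (hsymm : ∀ u v : H, a u v = a v u)
    (hcoer : ∀ v : H, c * ‖v‖ ^ 2 ≤ a v v)
    (f : H) (K : Set H) (hK : K.Nonempty) (hKclosed : IsClosed K) (hKconv : Convex ℝ K) :
    ∃! u : H, u ∈ K ∧ ∀ v ∈ K, ⟪f, v - u⟫ ≤ a u (v - u) := by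
  -- uniqueness
  have uniq : ∀ u u' : H, (u ∈ K ∧ ∀ v ∈ K, ⟪f, v - u⟫ ≤ a u (v - u)) →
      (u' ∈ K ∧ ∀ v ∈ K, ⟪f, v - u'⟫ ≤ a u' (v - u')) → u' = u := by
    rintro u u' ⟨hu, hvu⟩ ⟨hu', hvu'⟩
    have h1 := hvu u' hu'
    have h2 := hvu' u hu
    have hsum : ⟪f, u' - u⟫ + ⟪f, u - u'⟫ = 0 := by
      rw [← inner_add_right]; simp
    have hA : a (u - u') (u - u') ≤ 0 := by
      have e1 : a (u - u') (u - u') = -(a u (u' - u)) - a u' (u - u') := by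
        simp [map_sub, LinearMap.sub_apply]; ring
      rw [e1]; linarith
    have hn2 : ‖u - u'‖ ^ 2 ≤ 0 := by
      have h := (hcoer (u - u')).trans hA
      nlinarith [sq_nonneg ‖u - u'‖]
    have hz : ‖u - u'‖ ^ 2 = 0 := le_antisymm hn2 (sq_nonneg _)
    have : u - u' = 0 := by
      rwa [pow_eq_zero_iff two_ne_zero, norm_eq_zero] at hz
    rw [sub_eq_zero] at this; exact this.symm
  rcases subsingleton_or_nontrivial H with hs | hs
  · obtain ⟨u, hu⟩ := hK
    refine ⟨u, ⟨hu, fun v hv => ?_⟩, fun u' hu' => uniq u u' ⟨hu, fun v hv => ?_⟩ hu'⟩ <;>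
    · have : v - u = 0 := Subsingleton.elim _ _
      simp [this]
  -- nontrivial case
  obtain ⟨x₀, hx₀⟩ := exists_ne (0 : H)
  have hx₀n : 0 < ‖x₀‖ := norm_pos_iff.2 hx₀
  have hcC : c ≤ C := by
    have h1 := hcoer x₀
    have h2 := (le_abs_self _).trans (hbound x₀ x₀)
    have h3 : c * ‖x₀‖ ^ 2 ≤ C * ‖x₀‖ ^ 2 := by nlinarith
    exact (mul_le_mul_iff_of_pos_right (by positivity)).1 h3
  have hC : 0 < C := hc.trans_le hcC
  -- projection onto K
  have hproj : ∀ x : H, ∃ y, y ∈ K ∧ ∀ w ∈ K, ⟪x - y, w - y⟫ ≤ 0 := by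
    intro x
    obtain ⟨y, hyK, hy⟩ :=
      exists_norm_eq_iInf_of_complete_convex hK hKclosed.isComplete hKconv x
    exact ⟨y, hyK, (norm_eq_iInf_iff_real_inner_le_zero hKconv hyK).1 hy⟩
  set P : H → H := fun x => (hproj x).choose with hPdef
  have hPK : ∀ x, P x ∈ K := fun x => (hproj x).choose_spec.1
  have hPchar : ∀ x, ∀ w ∈ K, ⟪x - P x, w - P x⟫ ≤ 0 := fun x => (hproj x).choose_spec.2
  have hPnonexp : ∀ x y, ‖P x - P y‖ ≤ ‖x - y‖ := by
    intro x y
    have h1 := hPchar x (P y) (hPK y)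
    have h2 := hPchar y (P x) (hPK x)
    have key : ‖P x - P y‖ ^ 2 ≤ ⟪x - y, P x - P y⟫ := by
      have e : ⟪x - y, P x - P y⟫ - ‖P x - P y‖ ^ 2
          = -⟪x - P x, P y - P x⟫ - ⟪y - P y, P x - P y⟫ := by
        simp only [inner_sub_left, inner_sub_right, real_inner_self_eq_norm_sq]
        linarith [real_inner_comm (P x) (P y), real_inner_comm x (P y),
          real_inner_comm x (P x), real_inner_comm y (P x), real_inner_comm y (P y),
          real_inner_comm (P y) (P x), norm_sub_sq_real (P x) (P y)]
      nlinarith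
    have hcs := real_inner_le_norm (x - y) (P x - P y)
    nlinarith [norm_nonneg (P x - P y), norm_nonneg (x - y)]
  -- the operator A
  set A : H → H := fun u => (InnerProductSpace.toDual ℝ H).symm
    ((a u).mkContinuous (C * ‖u‖) (fun v => by
      simpa [Real.norm_eq_abs, mul_assoc] using hbound u v)) with hAdef
  have hA : ∀ u v, ⟪A u, v⟫ = a u v := by
    intro u v
    exact InnerProductSpace.toDual_symm_apply
  set ρ : ℝ := c / C ^ 2 with hρdef
  have hρ : 0 < ρ := div_pos hc (by positivity)
  set k : ℝ := Real.sqrt (1 - c ^ 2 / C ^ 2) with hkdef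
  have hfrac : c ^ 2 / C ^ 2 ≤ 1 := by
    rw [div_le_one (by positivity)]; nlinarith
  have hfracpos : 0 < c ^ 2 / C ^ 2 := by positivity
  have hk0 : 0 ≤ k := Real.sqrt_nonneg _
  have hksq : k ^ 2 = 1 - c ^ 2 / C ^ 2 := Real.sq_sqrt (by linarith)
  have hk1 : k < 1 := by nlinarith [hksq, hfracpos, hk0]
  -- key contraction estimate
  have key : ∀ z g : H, (∀ x, ⟪g, x⟫ = a z x) → ‖z - ρ • g‖ ≤ k * ‖z‖ := by
    intro z g hg
    have hgz : c * ‖z‖ ^ 2 ≤ ⟪g, z⟫ := by rw [hg]; exact hcoer z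
    have hgn : ‖g‖ ≤ C * ‖z‖ := by
      have h1 : ‖g‖ ^ 2 = ⟪g, g⟫ := (real_inner_self_eq_norm_sq g).symm
      have h2 : ⟪g, g⟫ ≤ C * ‖z‖ * ‖g‖ := (hg g).le.trans ((le_abs_self _).trans (hbound z g))
      rcases le_or_gt ‖g‖ 0 with h | h
      · exact h.trans (by positivity)
      · have h3 : ‖g‖ * ‖g‖ ≤ C * ‖z‖ * ‖g‖ := by rw [← pow_two]; linarith
        exact le_of_mul_le_mul_right h3 h
    have hsq : ‖z - ρ • g‖ ^ 2 ≤ k ^ 2 * ‖z‖ ^ 2 := by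
      have e : ‖z - ρ • g‖ ^ 2 = ‖z‖ ^ 2 - 2 * ρ * ⟪g, z⟫ + ρ ^ 2 * ‖g‖ ^ 2 := by
        rw [norm_sub_sq_real, real_inner_smul_right, norm_smul, real_inner_comm,
          Real.norm_eq_abs, abs_of_pos hρ]
        ring
      have hgn2 : ρ ^ 2 * ‖g‖ ^ 2 ≤ ρ ^ 2 * (C * ‖z‖) ^ 2 :=
        mul_le_mul_of_nonneg_left (pow_le_pow_left₀ (norm_nonneg g) hgn 2) (sq_nonneg ρ)
      rw [e, hksq]
      have hval : ‖z‖ ^ 2 - 2 * ρ * (c * ‖z‖ ^ 2) + ρ ^ 2 * (C * ‖z‖) ^ 2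
          = (1 - c ^ 2 / C ^ 2) * ‖z‖ ^ 2 := by
        rw [hρdef]; field_simp; ring
      nlinarith
    have h := Real.sqrt_le_sqrt hsq
    rwa [Real.sqrt_sq (norm_nonneg _),
      show k ^ 2 * ‖z‖ ^ 2 = (k * ‖z‖) ^ 2 by ring,
      Real.sqrt_sq (mul_nonneg hk0 (norm_nonneg z))] at h
  -- the contraction map
  set T : H → H := fun x => P (x - ρ • (A x - f)) with hTdef
  have hTlip : ∀ v w, ‖T v - T w‖ ≤ k * ‖v - w‖ := by
    intro v w
    have h1 : ‖T v - T w‖ ≤ ‖(v - ρ • (A v - f)) - (w - ρ • (A w - f))‖ := hPnonexp _ _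
    have e : (v - ρ • (A v - f)) - (w - ρ • (A w - f)) = (v - w) - ρ • (A v - A w) := by
      rw [smul_sub, smul_sub, smul_sub]; abel
    have hg : ∀ x, ⟪A v - A w, x⟫ = a (v - w) x := by
      intro x
      rw [inner_sub_left, hA, hA, map_sub, LinearMap.sub_apply]
    have h2 := key (v - w) (A v - A w) hg
    rw [e] at h1
    linarith
  have hcontr : ContractingWith k.toNNReal T := by
    constructor
    · exact_mod_cast Real.toNNReal_lt_one.2 hk1
    · refine LipschitzWith.of_dist_le_mul fun v w => ?_
      rw [dist_eq_norm, dist_eq_norm, Real.coe_toNNReal k hk0]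
      exact hTlip v w
  have : Nonempty H := ⟨hK.some⟩
  set u : H := ContractingWith.fixedPoint T hcontr with hudef
  have hfix : T u = u := hcontr.fixedPoint_isFixedPt
  have huK : u ∈ K := by rw [← hfix]; exact hPK _
  have hVI : ∀ v ∈ K, ⟪f, v - u⟫ ≤ a u (v - u) := by
    intro v hv
    have hfix' : P (u - ρ • (A u - f)) = u := by
      have h := hfix; rw [hTdef] at h; exact h
    have hchar := hPchar (u - ρ • (A u - f)) v hv
    rw [hfix'] at hchar
    have e : (u - ρ • (A u - f)) - u = -(ρ • (A u - f)) := by abel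
    rw [e, inner_neg_left, neg_nonpos, real_inner_smul_left] at hchar
    have h2 : 0 ≤ ⟪A u - f, v - u⟫ := by nlinarith [hchar, hρ]
    rw [inner_sub_left, hA] at h2
    linarith
  exact ⟨u, ⟨huK, hVI⟩, fun u' hu' => uniq u u' ⟨huK, hVI⟩ hu'⟩
end

section
/- Let a be a coercive continuous symmetric bilinear form on V with operator A, ψ ∈ V, f̂ := Aψ, f ∈ V', and K₁ = {v ∈ V : Av ≥ f in V'}. Then u satisfies the complementarity conditions (u ≥ ψ a.e., Au ≥ f in V', ⟨Au - f, u - ψ⟩ = 0) if and only if u ∈ K₁ and a(u, v - u) ≥ ⟨f̂, v - u⟩ for all v ∈ K₁. -/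
open RealInnerProductSpace

/-- Equivalence of the complementarity formulation of the obstacle problem with the
"dual" variational inequality over the set `K₁` of supersolutions.  `V` is a real
Hilbert space, `P` the closed convex cone of a.e. nonnegative elements (assumed
self-dual), `a` a continuous coercive symmetric bilinear form whose associated
operator `A : V → V'` (`⟨Av, φ⟩ = a(v,φ)`) is surjective, `f ∈ V'`, `ψ ∈ V`, and
`f̂ := Aψ`, i.e. `⟨f̂, φ⟩ = a(ψ, φ)`.  Then `u` satisfies `u ≥ ψ`, `Au ≥ f` in `V'`
and `⟨Au - f, u - ψ⟩ = 0` iff `u ∈ K₁ = {v : Av ≥ f}` and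
`a(u, v-u) ≥ ⟨f̂, v-u⟩` for all `v ∈ K₁`. -/
theorem complementarity_iff_dualVI
    {V : Type*} [NormedAddCommGroup V] [InnerProductSpace ℝ V] [CompleteSpace V]
    (a : V →ₗ[ℝ] V →ₗ[ℝ] ℝ) (C c : ℝ) (hc : 0 < c)
    (hbound : ∀ u v : V, |a u v| ≤ C * ‖u‖ * ‖v‖)
    (hsymm : ∀ u v : V, a u v = a v u)
    (hcoer : ∀ v : V, c * ‖v‖ ^ 2 ≤ a v v)
    (P : Set V) (hP0 : (0 : V) ∈ P) (hPclosed : IsClosed P) (hPconv : Convex ℝ P)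
    (hPcone : ∀ t : ℝ, 0 ≤ t → ∀ v ∈ P, t • v ∈ P)
    (hPselfdual : ∀ w : V, (∀ φ ∈ P, 0 ≤ ⟪φ, w⟫) → w ∈ P)
    (hAsurj : ∀ g : V →L[ℝ] ℝ, ∃ w : V, ∀ φ : V, a w φ = g φ)
    (f : V →L[ℝ] ℝ) (ψ u : V) :
    (u - ψ ∈ P ∧ (∀ φ ∈ P, f φ ≤ a u φ) ∧ a u (u - ψ) = f (u - ψ)) ↔
      ((∀ φ ∈ P, f φ ≤ a u φ) ∧
        ∀ v : V, (∀ φ ∈ P, f φ ≤ a v φ) → a ψ (v - u) ≤ a u (v - u)) := by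
  constructor
  · rintro ⟨hmem, hAu, heq⟩
    refine ⟨hAu, fun v hv => ?_⟩
    have h1 : f (u - ψ) ≤ a v (u - ψ) := hv _ hmem
    have key : a u (v - u) - a ψ (v - u) = a v (u - ψ) - a u (u - ψ) := by
      have h := hsymm (u - ψ) (v - u)
      simp only [map_sub, LinearMap.sub_apply] at h ⊢
      linarith
    linarith
  · rintro ⟨hAu, hVI⟩
    have hmem : u - ψ ∈ P := by
      by_contra hnot
      obtain ⟨g, t, hx, hs⟩ := geometric_hahn_banach_point_closed hPconv hPclosed hnot
      have ht0 : t < 0 := by simpa using hs 0 hP0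
      have hgP : ∀ φ ∈ P, 0 ≤ g φ := by
        intro φ hφ
        by_contra hneg
        push_neg at hneg
        have hpos : 0 ≤ (t - 1) / g φ := by
          rw [div_nonneg_iff]; right; constructor <;> linarith
        have := hs _ (hPcone _ hpos φ hφ)
        rw [map_smul, smul_eq_mul, div_mul_cancel₀ _ (ne_of_lt hneg)] at this
        linarith
      obtain ⟨w, hw⟩ := hAsurj g
      have hK : ∀ φ ∈ P, f φ ≤ a (u + w) φ := by
        intro φ hφ
        have := hgP φ hφ
        have h2 := hAu φ hφ
        simp only [map_add, LinearMap.add_apply, hw]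
        linarith
      have hvi := hVI (u + w) hK
      rw [add_sub_cancel_left] at hvi
      have hsym : a w u - a w ψ = a u w - a ψ w := by
        have h1 := hsymm u w
        have h2 := hsymm ψ w
        linarith
      have hw2 := hw (u - ψ)
      simp only [map_sub] at hw2 hx
      linarith
    refine ⟨hmem, hAu, le_antisymm ?_ (hAu _ hmem)⟩
    obtain ⟨w, hw⟩ := hAsurj f
    have hvi := hVI w (fun φ hφ => (hw φ).ge)
    have key : a u (w - u) - a ψ (w - u) = a w (u - ψ) - a u (u - ψ) := by
      have h := hsymm (u - ψ) (w - u)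
      simp only [map_sub, LinearMap.sub_apply] at h ⊢
      linarith
    have := hw (u - ψ)
    linarith
end
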